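/- arXiv:0710.2387 — 4 statements merged into one kernel-verified Lean document; each statement's English description precedes it below -/
import Mathlib

section
/- Let M₁ and M₂ be closed subspaces of a Hilbert space H and let M = M₁ ∩ M₂. Then for every x ∈ H, the sequence (P_{M₂}P_{M₁})ⁿ(x) converges in norm to P_M(x), where P_S denotes the orthogonal projection onto a closed subspace S. -/
open scoped InnerProductSpace

/-- The orthogonal projection onto a complete subspace, as a map `H → H`. -/
noncomputable def proj {𝕜 H : Type*} [RCLike 𝕜] [NormedAddCommGroup H]
    [InnerProductSpace 𝕜 H] (S : Submodule 𝕜 H) [CompleteSpace S] : H →L[𝕜] H :=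
  S.subtypeL.comp (S.orthogonalProjectionOnto)

section Aux
variable {𝕜 H : Type*} [RCLike 𝕜] [NormedAddCommGroup H] [InnerProductSpace 𝕜 H]
  (S : Submodule 𝕜 H) [CompleteSpace S]

local notation "⟪" x ", " y "⟫" => @inner 𝕜 _ _ x y

lemma proj_apply (v : H) : proj S v = (S.orthogonalProjectionOnto v : H) := rfl

lemma proj_mem (v : H) : proj S v ∈ S := (S.orthogonalProjectionOnto v).2

lemma proj_inner_left (u w : H) : ⟪proj S u, w⟫ = ⟪u, proj S w⟫ :=
  Submodule.inner_starProjection_left_eq_right S u w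

lemma inner_proj_self (v : H) : ⟪proj S v, v⟫ = ((‖proj S v‖ ^ 2 : ℝ) : 𝕜) := by
  have h0 : ⟪v - proj S v, proj S v⟫ = 0 :=
    Submodule.starProjection_inner_eq_zero (K := S) v (proj S v) (proj_mem S v)
  have h1 : ⟪proj S v, v - proj S v⟫ = 0 := by
    rw [inner_eq_zero_symm]; exact h0
  have := inner_sub_right (𝕜 := 𝕜) (proj S v) v (proj S v)
  rw [h1] at this
  have h2 : ⟪proj S v, v⟫ = ⟪proj S v, proj S v⟫ := sub_eq_zero.mp this.symm
  rw [h2, inner_self_eq_norm_sq_to_K]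
  norm_cast

lemma norm_proj_le (v : H) : ‖proj S v‖ ≤ ‖v‖ := by
  have h := inner_proj_self S v
  have hre : ‖proj S v‖ ^ 2 = RCLike.re ⟪proj S v, v⟫ := by
    rw [h]; exact (RCLike.ofReal_re _).symm
  have hcs : RCLike.re ⟪proj S v, v⟫ ≤ ‖proj S v‖ * ‖v‖ :=
    le_trans (RCLike.re_le_norm _) (by simpa using norm_inner_le_norm (𝕜 := 𝕜) (proj S v) v)
  nlinarith [norm_nonneg (proj S v), norm_nonneg v]

end Aux

/-- von Neumann: the alternating projections `(P_{M₂} P_{M₁})ⁿ x` converge to `P_{M₁ ∩ M₂} x`. -/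
theorem alternating_projections_converge {𝕜 H : Type*} [RCLike 𝕜] [NormedAddCommGroup H]
    [InnerProductSpace 𝕜 H] [CompleteSpace H] (M₁ M₂ : Submodule 𝕜 H)
    [CompleteSpace M₁] [CompleteSpace M₂] [CompleteSpace (M₁ ⊓ M₂ : Submodule 𝕜 H)]
    (x : H) :
    Filter.Tendsto (fun n : ℕ => (((proj M₂).comp (proj M₁)) ^ n) x)
      Filter.atTop (nhds (proj (M₁ ⊓ M₂) x)) := by
  classical
  let y : ℕ → H := fun n =>
    Nat.rec (motive := fun _ => H) x
      (fun n v => if Even n then proj M₁ v else proj M₂ v) n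
  have hy0 : y 0 = x := rfl
  have hysucc : ∀ n, y (n + 1) = if Even n then proj M₁ (y n) else proj M₂ (y n) :=
    fun n => rfl
  -- the swap identity
  have hswap : ∀ k m, ⟪y (m + 2*k + 1), y m⟫_𝕜 = ⟪y (m + k + 1), y (m + k)⟫_𝕜 := by
    intro k
    induction k with
    | zero => intro m; norm_num
    | succ k ih =>
      intro m
      have e1 : m + 2*(k+1) + 1 = (m + 2*k + 2) + 1 := by ring
      rcases Nat.even_or_odd m with hm | hm
      · have hA : Even (m + 2*k + 2) := by
          rcases hm with ⟨t, ht⟩; exact ⟨t + k + 1, by omega⟩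
        calc ⟪y (m + 2*(k+1) + 1), y m⟫_𝕜
            = ⟪proj M₁ (y (m + 2*k + 2)), y m⟫_𝕜 := by
              rw [e1, hysucc (m + 2*k + 2), if_pos hA]
          _ = ⟪y (m + 2*k + 2), proj M₁ (y m)⟫_𝕜 := proj_inner_left _ _ _
          _ = ⟪y ((m+1) + 2*k + 1), y (m + 1)⟫_𝕜 := by
              rw [hysucc m, if_pos hm, show (m+1) + 2*k + 1 = m + 2*k + 2 from by ring]
          _ = ⟪y ((m+1) + k + 1), y ((m+1) + k)⟫_𝕜 := ih (m+1)
          _ = ⟪y (m + (k+1) + 1), y (m + (k+1))⟫_𝕜 := by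
              rw [show (m+1) + k + 1 = m + (k+1) + 1 from by ring,
                show (m+1) + k = m + (k+1) from by ring]
      · have hm' : ¬ Even m := Nat.not_even_iff_odd.mpr hm
        have hA : ¬ Even (m + 2*k + 2) := by
          rcases hm with ⟨t, ht⟩
          rw [Nat.even_iff]; omega
        calc ⟪y (m + 2*(k+1) + 1), y m⟫_𝕜
            = ⟪proj M₂ (y (m + 2*k + 2)), y m⟫_𝕜 := by
              rw [e1, hysucc (m + 2*k + 2), if_neg hA]
          _ = ⟪y (m + 2*k + 2), proj M₂ (y m)⟫_𝕜 := proj_inner_left _ _ _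
          _ = ⟪y ((m+1) + 2*k + 1), y (m + 1)⟫_𝕜 := by
              rw [hysucc m, if_neg hm', show (m+1) + 2*k + 1 = m + 2*k + 2 from by ring]
          _ = ⟪y ((m+1) + k + 1), y ((m+1) + k)⟫_𝕜 := ih (m+1)
          _ = ⟪y (m + (k+1) + 1), y (m + (k+1))⟫_𝕜 := by
              rw [show (m+1) + k + 1 = m + (k+1) + 1 from by ring,
                show (m+1) + k = m + (k+1) from by ring]
  have hinner_succ : ∀ n, ⟪y (n+1), y n⟫_𝕜 = ((‖y (n+1)‖ ^ 2 : ℝ) : 𝕜) := by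
    intro n
    rcases Nat.even_or_odd n with hn | hn
    · rw [hysucc n, if_pos hn]; exact inner_proj_self M₁ (y n)
    · rw [hysucc n, if_neg (Nat.not_even_iff_odd.mpr hn)]; exact inner_proj_self M₂ (y n)
  let c : ℕ → ℝ := fun n => ‖y n‖ ^ 2
  have hcanti : Antitone c := by
    apply antitone_nat_of_succ_le
    intro n
    have h : ‖y (n+1)‖ ≤ ‖y n‖ := by
      rcases Nat.even_or_odd n with hn | hn
      · rw [hysucc n, if_pos hn]; exact norm_proj_le M₁ (y n)
      · rw [hysucc n, if_neg (Nat.not_even_iff_odd.mpr hn)]; exact norm_proj_le M₂ (y n)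
    exact pow_le_pow_left₀ (norm_nonneg _) h 2
  have hccauchy : CauchySeq c := by
    have hbdd : BddBelow (Set.range c) := ⟨0, by rintro r ⟨n, rfl⟩; exact sq_nonneg _⟩
    exact (tendsto_atTop_ciInf hcanti hbdd).cauchySeq
  have hoddinner : ∀ k m, RCLike.re ⟪y (m + 2*k + 1), y m⟫_𝕜 = c (m + k + 1) := by
    intro k m
    rw [hswap k m, hinner_succ (m + k)]
    exact RCLike.ofReal_re _
  have hdistsq : ∀ k m, ‖y (m + 2*k + 1) - y m‖ ^ 2 ≤ c m - c (m + 2*k + 1) := by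
    intro k m
    have h := norm_sub_sq (𝕜 := 𝕜) (y (m + 2*k + 1)) (y m)
    rw [hoddinner k m] at h
    have hmid : c (m + 2*k + 1) ≤ c (m + k + 1) := hcanti (show m + k + 1 ≤ m + 2*k + 1 by omega)
    have hdef1 : ‖y (m + 2*k + 1)‖ ^ 2 = c (m + 2*k + 1) := rfl
    have hdef2 : ‖y m‖ ^ 2 = c m := rfl
    rw [hdef1, hdef2] at h
    linarith
  have hycauchy : CauchySeq y := by
    rw [Metric.cauchySeq_iff']
    intro ε hε
    obtain ⟨N, hN⟩ := Metric.cauchySeq_iff'.mp hccauchy ((ε/2) ^ 2) (by positivity)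
    refine ⟨N, fun n hn => ?_⟩
    have key : ∀ k m, N ≤ m → dist (y (m + 2*k + 1)) (y m) < ε/2 := by
      intro k m hm
      have h1 := hdistsq k m
      have h2 : c m ≤ c N := hcanti hm
      have h3 : dist (c (m + 2*k + 1)) (c N) < (ε/2) ^ 2 := hN (m + 2*k + 1) (by omega)
      have h4 : c N - c (m + 2*k + 1) < (ε/2) ^ 2 := by
        rw [Real.dist_eq] at h3
        have := abs_lt.mp h3
        linarith [this.1]
      rw [dist_eq_norm]
      have h5 : ‖y (m + 2*k + 1) - y m‖ ^ 2 < (ε/2) ^ 2 := by linarith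
      exact lt_of_pow_lt_pow_left₀ 2 (by positivity) h5
    rcases Nat.even_or_odd (n - N) with he | ho
    · obtain ⟨t, ht⟩ := he
      have hnN : n = N + 2*t ∨ n = N := by omega
      have hn1 : n + 1 = N + 2*t + 1 ∨ n + 1 = N + 2*0 + 1 := by omega
      have d1 : dist (y n) (y (n + 1)) < ε/2 := by
        rw [dist_comm]
        exact key 0 n hn
      have d2 : dist (y (n + 1)) (y N) < ε/2 := by
        rcases hn1 with h | h
        · rw [h]; exact key t N le_rfl
        · rw [h]; exact key 0 N le_rfl
      calc dist (y n) (y N) ≤ dist (y n) (y (n+1)) + dist (y (n+1)) (y N) :=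
            dist_triangle _ _ _
        _ < ε := by linarith
    · obtain ⟨t, ht⟩ := ho
      have : n = N + 2*t + 1 := by omega
      rw [this]
      exact (key t N le_rfl).trans (by linarith)
  obtain ⟨z, hz⟩ := cauchySeq_tendsto_of_complete hycauchy
  have htwo : Filter.Tendsto (fun k : ℕ => 2*k) Filter.atTop Filter.atTop :=
    Filter.tendsto_atTop_atTop.mpr fun b => ⟨b, fun a ha => by omega⟩
  have hzM1 : z ∈ M₁ := by
    have hcl : IsClosed (M₁ : Set H) :=
      (completeSpace_coe_iff_isComplete.mp ‹_›).isClosed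
    have hf : Filter.Tendsto (fun k : ℕ => 2*k + 1) Filter.atTop Filter.atTop :=
      Filter.tendsto_atTop_atTop.mpr fun b => ⟨b, fun a ha => by omega⟩
    have hsub : Filter.Tendsto (fun k : ℕ => y (2*k + 1)) Filter.atTop (nhds z) :=
      hz.comp hf
    refine hcl.mem_of_tendsto hsub (Filter.Eventually.of_forall fun k => ?_)
    rw [hysucc, if_pos ⟨k, by ring⟩]
    exact proj_mem M₁ _
  have hzM2 : z ∈ M₂ := by
    have hcl : IsClosed (M₂ : Set H) :=
      (completeSpace_coe_iff_isComplete.mp ‹_›).isClosed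
    have hf : Filter.Tendsto (fun k : ℕ => 2*k + 2) Filter.atTop Filter.atTop :=
      Filter.tendsto_atTop_atTop.mpr fun b => ⟨b, fun a ha => by omega⟩
    have hsub : Filter.Tendsto (fun k : ℕ => y (2*k + 2)) Filter.atTop (nhds z) :=
      hz.comp hf
    refine hcl.mem_of_tendsto hsub (Filter.Eventually.of_forall fun k => ?_)
    have hodd : ¬ Even (2*k + 1) := by rw [Nat.even_iff]; omega
    rw [show 2*k + 2 = (2*k + 1) + 1 from rfl, hysucc, if_neg hodd]
    exact proj_mem M₂ _
  have horth : ∀ w ∈ (M₁ ⊓ M₂ : Submodule 𝕜 H), ∀ n, ⟪x - y n, w⟫_𝕜 = 0 := by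
    intro w hw
    obtain ⟨hw1, hw2⟩ := Submodule.mem_inf.mp hw
    intro n
    induction n with
    | zero => rw [hy0]; simp
    | succ n ih =>
      have hsplit : x - y (n+1) = (x - y n) + (y n - y (n+1)) := by abel
      rw [hsplit, inner_add_left, ih, zero_add]
      rcases Nat.even_or_odd n with hn | hn
      · rw [hysucc n, if_pos hn]
        exact Submodule.starProjection_inner_eq_zero (K := M₁) (y n) w hw1
      · rw [hysucc n, if_neg (Nat.not_even_iff_odd.mpr hn)]
        exact Submodule.starProjection_inner_eq_zero (K := M₂) (y n) w hw2
  have horthz : ∀ w ∈ (M₁ ⊓ M₂ : Submodule 𝕜 H), ⟪x - z, w⟫_𝕜 = 0 := by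
    intro w hw
    have h1 : Filter.Tendsto (fun n => ⟪x - y n, w⟫_𝕜) Filter.atTop (nhds ⟪x - z, w⟫_𝕜) :=
      (Filter.Tendsto.sub tendsto_const_nhds hz).inner tendsto_const_nhds
    have h2 : (fun n => ⟪x - y n, w⟫_𝕜) = fun _ => (0 : 𝕜) :=
      funext fun n => horth w hw n
    rw [h2] at h1
    exact tendsto_nhds_unique h1 tendsto_const_nhds
  have hprojz : proj (M₁ ⊓ M₂) x = z := by
    rw [proj_apply]
    exact Submodule.eq_starProjection_of_mem_of_inner_eq_zero (K := M₁ ⊓ M₂)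
      (Submodule.mem_inf.mpr ⟨hzM1, hzM2⟩) (fun w hw => horthz w hw)
  have hiter : ∀ n, (((proj M₂).comp (proj M₁)) ^ n) x = y (2*n) := by
    intro n
    induction n with
    | zero => simp [hy0]
    | succ n ih =>
      have hodd : ¬ Even (2*n + 1) := by rw [Nat.even_iff]; omega
      have hev : Even (2*n) := ⟨n, by ring⟩
      rw [pow_succ', ContinuousLinearMap.mul_apply, ih, ContinuousLinearMap.comp_apply,
        show 2*(n+1) = (2*n + 1) + 1 from by ring, hysucc (2*n + 1), if_neg hodd,
        hysucc (2*n), if_pos hev]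
  rw [hprojz]
  exact (hz.comp htwo).congr fun n => (hiter n).symm
end

section
/- Let M₁, M₂ be closed subspaces of a Hilbert space and M = M₁ ∩ M₂. Then c(M₁,M₂) < 1 if and only if M₁ + M₂ is a closed subspace. -/
open scoped InnerProductSpace

/-- The cosine of the Friedrichs angle between two subspaces. -/
noncomputable def fcos {𝕜 H : Type*} [RCLike 𝕜] [NormedAddCommGroup H]
    [InnerProductSpace 𝕜 H] (M₁ M₂ : Submodule 𝕜 H) : ℝ :=
  sSup {r : ℝ | ∃ x ∈ M₁ ⊓ (M₁ ⊓ M₂)ᗮ, ∃ y ∈ M₂ ⊓ (M₁ ⊓ M₂)ᗮ,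
    ‖x‖ ≤ 1 ∧ ‖y‖ ≤ 1 ∧ r = ‖(⟪x, y⟫_𝕜 : 𝕜)‖}

set_option linter.unusedSectionVars false
set_option maxHeartbeats 1000000

section aux
variable {𝕜 H : Type*} [RCLike 𝕜] [NormedAddCommGroup H] [InnerProductSpace 𝕜 H]
  [CompleteSpace H]

/-- If `M ≤ K` and `M` is complete, then `K = M ⊔ (K ⊓ Mᗮ)`. -/
theorem aux_sup_inf_orth {M K : Submodule 𝕜 H} [CompleteSpace M] (h : M ≤ K) :
    K = M ⊔ (K ⊓ Mᗮ) := by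
  refine le_antisymm ?_ (sup_le h inf_le_left)
  intro x hx
  have h1 : (Submodule.orthogonalProjectionOnto M x : H) ∈ M := (Submodule.orthogonalProjectionOnto M x).2
  have h2 : x - Submodule.orthogonalProjectionOnto M x ∈ K ⊓ Mᗮ :=
    ⟨K.sub_mem hx (h h1), Submodule.sub_starProjection_mem_orthogonal x⟩
  have : x = (Submodule.orthogonalProjectionOnto M x : H) + (x - Submodule.orthogonalProjectionOnto M x) := by abel
  rw [this]
  exact Submodule.add_mem_sup h1 h2

/-- If `V ≤ Uᗮ`, `U` complete, `V` closed, then `U ⊔ V` is closed. -/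
theorem aux_isClosed_sup {U V : Submodule 𝕜 H} [CompleteSpace U]
    (hV : IsClosed (V : Set H)) (hUV : V ≤ Uᗮ) :
    IsClosed ((U ⊔ V : Submodule 𝕜 H) : Set H) := by
  have hf : Continuous fun z : H => z - (Submodule.orthogonalProjectionOnto U z : H) := by
    exact continuous_id.sub ((U.subtypeL.comp (Submodule.orthogonalProjectionOnto U)).continuous)
  have hset : ((U ⊔ V : Submodule 𝕜 H) : Set H)
      = (fun z : H => z - (Submodule.orthogonalProjectionOnto U z : H)) ⁻¹' (V : Set H) := by
    ext z
    simp only [Set.mem_preimage, SetLike.mem_coe]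
    constructor
    · intro hz
      rcases Submodule.mem_sup.1 hz with ⟨u, hu, v, hv, rfl⟩
      have h1 : Submodule.orthogonalProjectionOnto U (u + v) = ⟨u, hu⟩ := by
        rw [map_add, Submodule.orthogonalProjectionOnto_mem_subspace_eq_self ⟨u, hu⟩,
          Submodule.orthogonalProjectionOnto_apply_of_mem_orthogonal (hUV hv)]
        simp
      rw [h1]
      simpa using hv
    · intro hz
      have : z = (Submodule.orthogonalProjectionOnto U z : H) + (z - Submodule.orthogonalProjectionOnto U z) := by abel
      rw [this]
      exact Submodule.add_mem_sup (Submodule.orthogonalProjectionOnto U z).2 hz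
  rw [hset]
  exact hV.preimage hf


/-- `(M₁ ⊓ Mᗮ) ⊔ (M₂ ⊓ Mᗮ) = (M₁ ⊔ M₂) ⊓ Mᗮ` where `M = M₁ ⊓ M₂`. -/
theorem aux_sup_inf_eq (M₁ M₂ : Submodule 𝕜 H) [CompleteSpace (M₁ ⊓ M₂ : Submodule 𝕜 H)] :
    (M₁ ⊓ (M₁ ⊓ M₂)ᗮ) ⊔ (M₂ ⊓ (M₁ ⊓ M₂)ᗮ) = (M₁ ⊔ M₂) ⊓ (M₁ ⊓ M₂)ᗮ := by
  set M := M₁ ⊓ M₂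
  refine le_antisymm (sup_le (le_inf (le_trans inf_le_left le_sup_left) inf_le_right)
    (le_inf (le_trans inf_le_left le_sup_right) inf_le_right)) ?_
  rintro z ⟨hz1, hz2⟩
  rcases Submodule.mem_sup.1 hz1 with ⟨x₁, hx₁, x₂, hx₂, rfl⟩
  set P := Submodule.orthogonalProjectionOnto M
  have h₁ : x₁ - P x₁ ∈ M₁ ⊓ Mᗮ :=
    ⟨M₁.sub_mem hx₁ (P x₁).2.1, Submodule.sub_starProjection_mem_orthogonal x₁⟩
  have h₂ : x₂ - P x₂ ∈ M₂ ⊓ Mᗮ :=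
    ⟨M₂.sub_mem hx₂ (P x₂).2.2, Submodule.sub_starProjection_mem_orthogonal x₂⟩
  have hm : (P x₁ : H) + P x₂ ∈ M := M.add_mem (P x₁).2 (P x₂).2
  have horth : (P x₁ : H) + P x₂ ∈ Mᗮ := by
    have : (P x₁ : H) + P x₂ = (x₁ + x₂) - (x₁ - P x₁) - (x₂ - P x₂) := by abel
    rw [this]
    exact Mᗮ.sub_mem (Mᗮ.sub_mem hz2 h₁.2) h₂.2
  have hzero : (P x₁ : H) + P x₂ = 0 := by
    have := M.inf_orthogonal_eq_bot
    have hmem : (P x₁ : H) + P x₂ ∈ M ⊓ Mᗮ := ⟨hm, horth⟩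
    rw [this] at hmem
    simpa using hmem
  have : x₁ + x₂ = (x₁ - P x₁) + (x₂ - P x₂) := by
    rw [← sub_eq_zero]
    rw [← hzero]; abel
  rw [this]
  exact Submodule.add_mem_sup h₁ h₂

/-- If inner products are uniformly bounded, the sum is closed. -/
theorem aux_closed_of_bound {A B : Submodule 𝕜 H} (hA : IsClosed (A : Set H))
    (hB : IsClosed (B : Set H)) {c : ℝ} (hc0 : 0 ≤ c) (hc1 : c < 1)
    (hbd : ∀ a ∈ A, ∀ b ∈ B, ‖(⟪a, b⟫_𝕜 : 𝕜)‖ ≤ c * ‖a‖ * ‖b‖) :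
    IsClosed ((A ⊔ B : Submodule 𝕜 H) : Set H) := by
  -- key norm inequality
  have key : ∀ a ∈ A, ∀ b ∈ B, (1 - c) * (‖a‖ ^ 2 + ‖b‖ ^ 2) ≤ ‖a + b‖ ^ 2 := by
    intro a ha b hb
    have h1 := hbd a ha b hb
    have h2 : |RCLike.re (⟪a, b⟫_𝕜 : 𝕜)| ≤ ‖(⟪a, b⟫_𝕜 : 𝕜)‖ := RCLike.abs_re_le_norm _
    have h3 : ‖a + b‖ ^ 2 = ‖a‖ ^ 2 + 2 * RCLike.re (⟪a, b⟫_𝕜 : 𝕜) + ‖b‖ ^ 2 :=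
      norm_add_sq a b
    have h4 : 2 * ‖a‖ * ‖b‖ ≤ ‖a‖ ^ 2 + ‖b‖ ^ 2 := by nlinarith [sq_nonneg (‖a‖ - ‖b‖)]
    have h5 : -(c * ‖a‖ * ‖b‖) ≤ RCLike.re (⟪a, b⟫_𝕜 : 𝕜) := by
      have := abs_le.1 h2
      linarith [this.1]
    nlinarith [norm_nonneg a, norm_nonneg b, mul_nonneg (mul_nonneg hc0 (norm_nonneg a)) (norm_nonneg b)]
  -- the coefficient
  set L := Real.sqrt (1 / (1 - c)) with hL
  have hc' : 0 < 1 - c := by linarith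
  have hL0 : 0 ≤ L := Real.sqrt_nonneg _
  have hLsq : L ^ 2 = 1 / (1 - c) := Real.sq_sqrt (by positivity)
  have keyn : ∀ a ∈ A, ∀ b ∈ B, ‖a‖ ≤ L * ‖a + b‖ := by
    intro a ha b hb
    have h1 := key a ha b hb
    have h2 : ‖a‖ ^ 2 ≤ (L * ‖a + b‖) ^ 2 := by
      rw [mul_pow, hLsq]
      rw [div_mul_eq_mul_div, one_mul, le_div_iff₀ hc']
      nlinarith [sq_nonneg (‖b‖)]
    have := Real.sqrt_le_sqrt h2
    rwa [Real.sqrt_sq (norm_nonneg a), Real.sqrt_sq (by positivity)] at this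
  -- sequential closedness
  rw [← isSeqClosed_iff_isClosed]
  intro z l hz hlim
  choose a ha b hb hab using fun n => Submodule.mem_sup.1 (hz n)
  have hzc : CauchySeq z := hlim.cauchySeq
  have hcauchy : CauchySeq a := by
    rw [Metric.cauchySeq_iff] at hzc ⊢
    intro ε hε
    obtain ⟨N, hN⟩ := hzc (ε / (L + 1)) (by positivity)
    refine ⟨N, fun m hm n hn => ?_⟩
    have h1 : a m - a n ∈ A := A.sub_mem (ha m) (ha n)
    have h2 : b m - b n ∈ B := B.sub_mem (hb m) (hb n)
    have h3 := keyn _ h1 _ h2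
    have h4 : (a m - a n) + (b m - b n) = z m - z n := by
      rw [← hab m, ← hab n]; abel
    rw [h4] at h3
    have h5 := hN m hm n hn
    rw [dist_eq_norm] at h5 ⊢
    calc ‖a m - a n‖ ≤ L * ‖z m - z n‖ := h3
      _ ≤ L * (ε / (L + 1)) := by
          apply mul_le_mul_of_nonneg_left (le_of_lt h5) hL0
      _ < ε := by
          rw [mul_div_assoc']
          rw [div_lt_iff₀ (by positivity)]
          nlinarith
  obtain ⟨la, hla⟩ := cauchySeq_tendsto_of_complete hcauchy
  have hlb : Filter.Tendsto b Filter.atTop (nhds (l - la)) := by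
    have heq : ∀ n, b n = z n - a n := fun n => by rw [← hab n]; abel
    have := hlim.sub hla
    exact this.congr (fun n => (heq n).symm)
  have hlaA : la ∈ A := hA.mem_of_tendsto hla (Filter.Eventually.of_forall ha)
  have hlbB : l - la ∈ B := hB.mem_of_tendsto hlb (Filter.Eventually.of_forall hb)
  have : l = la + (l - la) := by abel
  rw [this]
  exact Submodule.add_mem_sup hlaA hlbB


theorem aux_unit_scale (a : H) (ha : a ≠ 0) :
    ‖((‖a‖ : 𝕜))⁻¹ • a‖ = 1 := by
  rw [norm_smul, norm_inv, RCLike.norm_ofReal, abs_of_nonneg (norm_nonneg a),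
    inv_mul_cancel₀ (norm_ne_zero_iff.2 ha)]

theorem aux_inner_scale (a b : H) :
    ‖(⟪((‖a‖ : 𝕜))⁻¹ • a, ((‖b‖ : 𝕜))⁻¹ • b⟫_𝕜 : 𝕜)‖
      = ‖a‖⁻¹ * ‖b‖⁻¹ * ‖(⟪a, b⟫_𝕜 : 𝕜)‖ := by
  rw [inner_smul_left, inner_smul_right, norm_mul, norm_mul, RCLike.norm_conj,
    norm_inv, norm_inv, RCLike.norm_ofReal, RCLike.norm_ofReal,
    abs_of_nonneg (norm_nonneg a), abs_of_nonneg (norm_nonneg b)]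
  ring

/-- If `A ⊔ B` is closed and `A ⊓ B = ⊥`, inner products of unit-ball vectors
are uniformly bounded away from 1. -/
theorem aux_bound_of_closed {A B : Submodule 𝕜 H} (hA : IsClosed (A : Set H))
    (hB : IsClosed (B : Set H)) (hAB : A ⊓ B = ⊥)
    (hsum : IsClosed ((A ⊔ B : Submodule 𝕜 H) : Set H)) :
    ∃ c : ℝ, 0 ≤ c ∧ c < 1 ∧ ∀ a ∈ A, ∀ b ∈ B, ‖a‖ ≤ 1 → ‖b‖ ≤ 1 →
      ‖(⟪a, b⟫_𝕜 : 𝕜)‖ ≤ c := by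
  haveI : CompleteSpace A := hA.completeSpace_coe
  haveI : CompleteSpace B := hB.completeSpace_coe
  haveI : CompleteSpace (A ⊔ B : Submodule 𝕜 H) := hsum.completeSpace_coe
  -- the addition map as a continuous linear map
  let Tlin : (A × B) →ₗ[𝕜] (A ⊔ B : Submodule 𝕜 H) :=
    { toFun := fun p => ⟨(p.1 : H) + p.2, Submodule.add_mem_sup p.1.2 p.2.2⟩
      map_add' := fun p q => by ext; simp; abel
      map_smul' := fun r p => by ext; simp [smul_add] }
  have Tbound : ∀ p : A × B, ‖Tlin p‖ ≤ 2 * ‖p‖ := by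
    intro p
    have h1 : ‖Tlin p‖ = ‖(p.1 : H) + p.2‖ := rfl
    rw [h1]
    calc ‖(p.1 : H) + p.2‖ ≤ ‖(p.1 : H)‖ + ‖(p.2 : H)‖ := norm_add_le _ _
      _ ≤ ‖p‖ + ‖p‖ := add_le_add (norm_fst_le p) (norm_snd_le p)
      _ = 2 * ‖p‖ := by ring
  let T : (A × B) →L[𝕜] (A ⊔ B : Submodule 𝕜 H) := Tlin.mkContinuous 2 Tbound
  have hker : LinearMap.ker (T : (A × B) →ₗ[𝕜] (A ⊔ B : Submodule 𝕜 H)) = ⊥ := by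
    rw [eq_bot_iff]
    intro p hp
    have h1 : (p.1 : H) + p.2 = 0 := congrArg Subtype.val (LinearMap.mem_ker.1 hp)
    have h2 : (p.1 : H) = -(p.2 : H) := by
      rw [← sub_eq_zero]; rw [← h1]; abel
    have h3 : (p.1 : H) ∈ A ⊓ B := ⟨p.1.2, by rw [h2]; exact B.neg_mem p.2.2⟩
    rw [hAB] at h3
    have h4 : (p.1 : H) = 0 := (Submodule.mem_bot 𝕜).1 h3
    have h5 : (p.2 : H) = 0 := by
      have := h2; rw [h4] at this
      simpa using this.symm
    simp only [Submodule.mem_bot]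
    exact Prod.ext (Subtype.ext h4) (Subtype.ext h5)
  have hrange : LinearMap.range (T : (A × B) →ₗ[𝕜] (A ⊔ B : Submodule 𝕜 H)) = ⊤ := by
    rw [LinearMap.range_eq_top]
    rintro ⟨v, hv⟩
    rcases Submodule.mem_sup.1 hv with ⟨a, ha, b, hb, rfl⟩
    exact ⟨(⟨a, ha⟩, ⟨b, hb⟩), rfl⟩
  let e := ContinuousLinearEquiv.ofBijective T hker hrange
  set K : ℝ := max ‖(e.symm : (A ⊔ B : Submodule 𝕜 H) →L[𝕜] A × B)‖ 1 with hK
  have hK1 : 1 ≤ K := le_max_right _ _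
  have hK0 : 0 < K := lt_of_lt_of_le one_pos hK1
  have hK2 : (0:ℝ) < K ^ 2 := by positivity
  have hhalf : 1 / (2 * K ^ 2) ≤ 1 / 2 := by
    rw [div_le_div_iff₀ (by positivity) (by norm_num)]
    nlinarith
  have hposK : (0:ℝ) < 1 / (2 * K ^ 2) := by positivity
  refine ⟨1 - 1 / (2 * K ^ 2), by linarith, by linarith, ?_⟩
  -- first, the unit-vector case
  have unit_case : ∀ a ∈ A, ∀ b ∈ B, ‖a‖ = 1 → ‖b‖ = 1 →
      ‖(⟪a, b⟫_𝕜 : 𝕜)‖ ≤ 1 - 1 / (2 * K ^ 2) := by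
    intro a ha b hb hna hnb
    set z : 𝕜 := ⟪a, b⟫_𝕜 with hz
    rcases eq_or_ne z 0 with h0 | h0
    · rw [h0, norm_zero]; linarith
    set θ : 𝕜 := (‖z‖ : 𝕜) / z with hθ
    have hθn : ‖θ‖ = 1 := by
      rw [hθ, norm_div, RCLike.norm_ofReal, abs_of_nonneg (norm_nonneg z),
        div_self (norm_ne_zero_iff.2 h0)]
    set w : H := θ • b with hw
    have hwB : w ∈ B := B.smul_mem θ hb
    have hnw : ‖w‖ = 1 := by rw [hw, norm_smul, hθn, one_mul, hnb]
    have hinner : (⟪a, w⟫_𝕜 : 𝕜) = (‖z‖ : 𝕜) := by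
      rw [hw, inner_smul_right, ← hz, hθ, div_mul_cancel₀ _ h0]
    have hsub : ‖a - w‖ ^ 2 = 2 - 2 * ‖z‖ := by
      rw [@norm_sub_sq 𝕜, hinner, hna, hnw, RCLike.ofReal_re]
      ring
    -- use the bounded inverse
    set p : A × B := (⟨a, ha⟩, ⟨-w, B.neg_mem hwB⟩) with hp
    have hTp : ((T p : (A ⊔ B : Submodule 𝕜 H)) : H) = a - w := by
      show a + -w = a - w
      abel
    have hsymm : e.symm (T p) = p := by
      have : T p = e p := rfl
      rw [this, e.symm_apply_apply]
    have h1 : (1 : ℝ) ≤ K * ‖a - w‖ := by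
      have h2 : ‖p.1‖ ≤ ‖p‖ := norm_fst_le p
      have h3 : ‖p.1‖ = 1 := by
        show ‖(⟨a, ha⟩ : A)‖ = 1
        rw [← hna]; rfl
      have h4 : ‖e.symm (T p)‖ ≤ ‖(e.symm : (A ⊔ B : Submodule 𝕜 H) →L[𝕜] A × B)‖ * ‖T p‖ :=
        (e.symm : (A ⊔ B : Submodule 𝕜 H) →L[𝕜] A × B).le_opNorm _
      have h5 : ‖T p‖ = ‖a - w‖ := by
        show ‖((T p : (A ⊔ B : Submodule 𝕜 H)) : H)‖ = _
        rw [hTp]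
      rw [hsymm, h5] at h4
      have h6 : ‖(e.symm : (A ⊔ B : Submodule 𝕜 H) →L[𝕜] A × B)‖ * ‖a - w‖ ≤ K * ‖a - w‖ :=
        mul_le_mul_of_nonneg_right (le_max_left _ _) (norm_nonneg _)
      calc (1:ℝ) = ‖p.1‖ := h3.symm
        _ ≤ ‖p‖ := h2
        _ ≤ K * ‖a - w‖ := le_trans h4 h6
    have h7 : (1 : ℝ) ≤ K ^ 2 * (2 - 2 * ‖z‖) := by
      calc (1:ℝ) ≤ K ^ 2 * ‖a - w‖ ^ 2 := by nlinarith [norm_nonneg (a - w)]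
        _ = K ^ 2 * (2 - 2 * ‖z‖) := by rw [hsub]
    have h8 : 1 / (2 * K ^ 2) ≤ 1 - ‖z‖ := by
      rw [div_le_iff₀ (by positivity)]
      nlinarith
    linarith
  -- extend to the unit ball
  intro a ha b hb hna hnb
  rcases eq_or_ne a 0 with rfl | ha0
  · simp only [inner_zero_left, norm_zero]
    linarith
  rcases eq_or_ne b 0 with rfl | hb0
  · simp only [inner_zero_right, norm_zero]
    linarith
  have hu : ((‖a‖ : 𝕜))⁻¹ • a ∈ A := A.smul_mem _ ha
  have hv : ((‖b‖ : 𝕜))⁻¹ • b ∈ B := B.smul_mem _ hb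
  have h1 := unit_case _ hu _ hv (aux_unit_scale a ha0) (aux_unit_scale b hb0)
  rw [aux_inner_scale] at h1
  have hna0 : 0 < ‖a‖ := norm_pos_iff.2 ha0
  have hnb0 : 0 < ‖b‖ := norm_pos_iff.2 hb0
  have key : (‖a‖ * ‖b‖) * (‖a‖⁻¹ * ‖b‖⁻¹ * ‖(⟪a, b⟫_𝕜 : 𝕜)‖) = ‖(⟪a, b⟫_𝕜 : 𝕜)‖ := by
    field_simp
  have h2 : ‖(⟪a, b⟫_𝕜 : 𝕜)‖ ≤ (‖a‖ * ‖b‖) * (1 - 1 / (2 * K ^ 2)) := by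
    rw [← key]
    exact mul_le_mul_of_nonneg_left h1 (le_of_lt (mul_pos hna0 hnb0))
  have hc0 : (0:ℝ) ≤ 1 - 1 / (2 * K ^ 2) := by linarith
  have h4 : ‖a‖ * ‖b‖ ≤ 1 := by nlinarith
  have h5 : ‖a‖ * ‖b‖ * (1 - 1 / (2 * K ^ 2)) ≤ 1 * (1 - 1 / (2 * K ^ 2)) :=
    mul_le_mul_of_nonneg_right h4 hc0
  linarith

end aux

/-- `c(M₁,M₂) < 1` iff `M₁ + M₂` is closed. -/
theorem fcos_lt_one_iff_sum_closed {𝕜 H : Type*} [RCLike 𝕜] [NormedAddCommGroup H]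
    [InnerProductSpace 𝕜 H] [CompleteSpace H] (M₁ M₂ : Submodule 𝕜 H)
    (hM₁ : IsClosed (M₁ : Set H)) (hM₂ : IsClosed (M₂ : Set H)) :
    fcos M₁ M₂ < 1 ↔ IsClosed ((M₁ ⊔ M₂ : Submodule 𝕜 H) : Set H) := by
  set M : Submodule 𝕜 H := M₁ ⊓ M₂ with hM
  have hMc : IsClosed (M : Set H) := by
    rw [hM, Submodule.coe_inf]
    exact hM₁.inter hM₂
  haveI : CompleteSpace M := hMc.completeSpace_coe
  set A : Submodule 𝕜 H := M₁ ⊓ Mᗮ with hA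
  set B : Submodule 𝕜 H := M₂ ⊓ Mᗮ with hB
  have hAc : IsClosed (A : Set H) := by
    rw [hA, Submodule.coe_inf]
    exact hM₁.inter M.isClosed_orthogonal
  have hBc : IsClosed (B : Set H) := by
    rw [hB, Submodule.coe_inf]
    exact hM₂.inter M.isClosed_orthogonal
  have hABbot : A ⊓ B = ⊥ := by
    rw [eq_bot_iff]
    intro x hx
    have : x ∈ M ⊓ Mᗮ := ⟨⟨hx.1.1, hx.2.1⟩, hx.1.2⟩
    rw [M.inf_orthogonal_eq_bot] at this
    exact this
  -- the set defining fcos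
  set S : Set ℝ := {r : ℝ | ∃ x ∈ M₁ ⊓ (M₁ ⊓ M₂)ᗮ, ∃ y ∈ M₂ ⊓ (M₁ ⊓ M₂)ᗮ,
    ‖x‖ ≤ 1 ∧ ‖y‖ ≤ 1 ∧ r = ‖(⟪x, y⟫_𝕜 : 𝕜)‖} with hS
  have hfcos : fcos M₁ M₂ = sSup S := rfl
  have hS0 : (0 : ℝ) ∈ S := by
    refine ⟨0, zero_mem _, 0, zero_mem _, by simp, by simp, by simp⟩
  have hSbdd : BddAbove S := by
    refine ⟨1, ?_⟩
    rintro r ⟨x, hx, y, hy, hx1, hy1, rfl⟩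
    calc ‖(⟪x, y⟫_𝕜 : 𝕜)‖ ≤ ‖x‖ * ‖y‖ := norm_inner_le_norm x y
      _ ≤ 1 := by nlinarith [norm_nonneg x, norm_nonneg y]
  -- decomposition identities
  have hsup : M₁ ⊔ M₂ = M ⊔ (A ⊔ B) := by
    have h1 : M₁ = M ⊔ A := aux_sup_inf_orth (inf_le_left : M ≤ M₁)
    have h2 : M₂ = M ⊔ B := aux_sup_inf_orth (inf_le_right : M ≤ M₂)
    calc M₁ ⊔ M₂ = (M ⊔ A) ⊔ (M ⊔ B) := by rw [← h1, ← h2]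
      _ = M ⊔ (A ⊔ B) := by rw [sup_sup_sup_comm, sup_idem]
  constructor
  · -- fcos < 1 → closed
    intro hlt
    set c : ℝ := fcos M₁ M₂ with hc
    have hc0 : 0 ≤ c := le_csSup hSbdd hS0
    have hbd : ∀ a ∈ A, ∀ b ∈ B, ‖(⟪a, b⟫_𝕜 : 𝕜)‖ ≤ c * ‖a‖ * ‖b‖ := by
      intro a ha b hb
      rcases eq_or_ne a 0 with rfl | ha0
      · simp
      rcases eq_or_ne b 0 with rfl | hb0
      · simp
      have hna0 : 0 < ‖a‖ := norm_pos_iff.2 ha0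
      have hnb0 : 0 < ‖b‖ := norm_pos_iff.2 hb0
      have hu : ((‖a‖ : 𝕜))⁻¹ • a ∈ M₁ ⊓ (M₁ ⊓ M₂)ᗮ := Submodule.smul_mem _ _ ha
      have hv : ((‖b‖ : 𝕜))⁻¹ • b ∈ M₂ ⊓ (M₁ ⊓ M₂)ᗮ := Submodule.smul_mem _ _ hb
      have hmem : ‖(⟪((‖a‖ : 𝕜))⁻¹ • a, ((‖b‖ : 𝕜))⁻¹ • b⟫_𝕜 : 𝕜)‖ ∈ S := by
        exact ⟨_, hu, _, hv, le_of_eq (aux_unit_scale a ha0),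
          le_of_eq (aux_unit_scale b hb0), rfl⟩
      have hle : ‖(⟪((‖a‖ : 𝕜))⁻¹ • a, ((‖b‖ : 𝕜))⁻¹ • b⟫_𝕜 : 𝕜)‖ ≤ c :=
        le_csSup hSbdd hmem
      rw [aux_inner_scale] at hle
      have key : (‖a‖ * ‖b‖) * (‖a‖⁻¹ * ‖b‖⁻¹ * ‖(⟪a, b⟫_𝕜 : 𝕜)‖) = ‖(⟪a, b⟫_𝕜 : 𝕜)‖ := by
        field_simp
      calc ‖(⟪a, b⟫_𝕜 : 𝕜)‖
          = (‖a‖ * ‖b‖) * (‖a‖⁻¹ * ‖b‖⁻¹ * ‖(⟪a, b⟫_𝕜 : 𝕜)‖) := key.symm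
        _ ≤ (‖a‖ * ‖b‖) * c := by
            exact mul_le_mul_of_nonneg_left hle (by positivity)
        _ = c * ‖a‖ * ‖b‖ := by ring
    have hABclosed : IsClosed ((A ⊔ B : Submodule 𝕜 H) : Set H) :=
      aux_closed_of_bound hAc hBc hc0 hlt hbd
    haveI : CompleteSpace (A ⊔ B : Submodule 𝕜 H) := hABclosed.completeSpace_coe
    rw [hsup]
    exact aux_isClosed_sup hABclosed (sup_le inf_le_right inf_le_right)
  · -- closed → fcos < 1
    intro hclosed
    have hsum : IsClosed ((A ⊔ B : Submodule 𝕜 H) : Set H) := by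
      have heq : A ⊔ B = (M₁ ⊔ M₂) ⊓ Mᗮ := aux_sup_inf_eq M₁ M₂
      rw [heq, Submodule.coe_inf]
      exact hclosed.inter M.isClosed_orthogonal
    obtain ⟨c, hc0, hc1, hbd⟩ := aux_bound_of_closed hAc hBc hABbot hsum
    rw [hfcos]
    calc sSup S ≤ c := by
          apply csSup_le ⟨0, hS0⟩
          rintro r ⟨x, hx, y, hy, hx1, hy1, rfl⟩
          exact hbd x hx y hy hx1 hy1
      _ < 1 := hc1
end

section
/- Let M₁, M₂ be closed subspaces of a Hilbert space, M = M₁ ∩ M₂, A = M₁ ∩ M^⊥, B = M₂ ∩ M^⊥. Then c(M₁,M₂) = ‖P_B P_A‖. -/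
open scoped InnerProductSpace

theorem proj_apply_mem {𝕜 H : Type*} [RCLike 𝕜] [NormedAddCommGroup H]
    [InnerProductSpace 𝕜 H] (S : Submodule 𝕜 H) [CompleteSpace S] (v : H) :
    proj S v ∈ S := (S.orthogonalProjectionOnto v).2

theorem proj_apply_eq_self {𝕜 H : Type*} [RCLike 𝕜] [NormedAddCommGroup H]
    [InnerProductSpace 𝕜 H] {S : Submodule 𝕜 H} [CompleteSpace S] {v : H}
    (hv : v ∈ S) : proj S v = v := Submodule.starProjection_eq_self_iff.mpr hv

theorem norm_proj_apply_le {𝕜 H : Type*} [RCLike 𝕜] [NormedAddCommGroup H]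
    [InnerProductSpace 𝕜 H] (S : Submodule 𝕜 H) [CompleteSpace S] (v : H) :
    ‖proj S v‖ ≤ ‖v‖ := by
  have := (S.orthogonalProjectionOnto).le_of_opNorm_le (Submodule.orthogonalProjectionOnto_norm_le S) v
  simpa [proj, one_mul] using this

theorem inner_proj_left {𝕜 H : Type*} [RCLike 𝕜] [NormedAddCommGroup H]
    [InnerProductSpace 𝕜 H] (S : Submodule 𝕜 H) [CompleteSpace S] (u v : H) :
    ⟪proj S u, v⟫_𝕜 = ⟪u, proj S v⟫_𝕜 :=
  Submodule.inner_starProjection_left_eq_right S u v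

theorem inner_proj_self_s9 {𝕜 H : Type*} [RCLike 𝕜] [NormedAddCommGroup H]
    [InnerProductSpace 𝕜 H] (S : Submodule 𝕜 H) [CompleteSpace S] (w : H) :
    ⟪w, proj S w⟫_𝕜 = ((‖proj S w‖ : ℝ) : 𝕜) ^ 2 := by
  have h1 : ⟪proj S w, proj S w⟫_𝕜 = ⟪w, proj S (proj S w)⟫_𝕜 :=
    inner_proj_left S w (proj S w)
  have h2 : proj S (proj S w) = proj S w :=
    proj_apply_eq_self (proj_apply_mem S w)
  rw [h2] at h1
  rw [← h1, inner_self_eq_norm_sq_to_K]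

/-- `c(M₁,M₂) = ‖P_B P_A‖` where `A = M₁ ∩ M^⊥`, `B = M₂ ∩ M^⊥`. -/
theorem fcos_eq_norm_comp {𝕜 H : Type*} [RCLike 𝕜] [NormedAddCommGroup H]
    [InnerProductSpace 𝕜 H] [CompleteSpace H] (M₁ M₂ : Submodule 𝕜 H)
    [CompleteSpace M₁] [CompleteSpace M₂]
    [CompleteSpace (M₁ ⊓ (M₁ ⊓ M₂)ᗮ : Submodule 𝕜 H)]
    [CompleteSpace (M₂ ⊓ (M₁ ⊓ M₂)ᗮ : Submodule 𝕜 H)] :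
    fcos M₁ M₂ = ‖(proj (M₂ ⊓ (M₁ ⊓ M₂)ᗮ)).comp (proj (M₁ ⊓ (M₁ ⊓ M₂)ᗮ))‖ := by
  set A : Submodule 𝕜 H := M₁ ⊓ (M₁ ⊓ M₂)ᗮ with hA
  set B : Submodule 𝕜 H := M₂ ⊓ (M₁ ⊓ M₂)ᗮ with hB
  set T : H →L[𝕜] H := (proj B).comp (proj A) with hTdef
  set S : Set ℝ := {r : ℝ | ∃ x ∈ A, ∃ y ∈ B,
    ‖x‖ ≤ 1 ∧ ‖y‖ ≤ 1 ∧ r = ‖(⟪x, y⟫_𝕜 : 𝕜)‖} with hSdef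
  have hT : ∀ v : H, T v = proj B (proj A v) := fun v => rfl
  have hzero : (0 : ℝ) ∈ S := by
    refine ⟨0, zero_mem A, 0, zero_mem B, by simp, by simp, by simp⟩
  have hbdd : BddAbove S := by
    refine ⟨1, fun r hr => ?_⟩
    obtain ⟨x, hx, y, hy, hx1, hy1, hreq⟩ := hr
    rw [hreq]
    calc ‖(⟪x, y⟫_𝕜 : 𝕜)‖ ≤ ‖x‖ * ‖y‖ := norm_inner_le_norm x y
      _ ≤ 1 := mul_le_one₀ hx1 (norm_nonneg y) hy1
  have hne : S.Nonempty := ⟨0, hzero⟩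
  have hsSup_nonneg : (0 : ℝ) ≤ sSup S := le_csSup hbdd hzero
  have hfcos : fcos M₁ M₂ = sSup S := rfl
  rw [hfcos]
  apply le_antisymm
  · -- sSup S ≤ ‖T‖
    apply csSup_le hne
    rintro r ⟨x, hx, y, hy, hx1, hy1, rfl⟩
    have hkey : ⟪x, y⟫_𝕜 = ⟪T x, y⟫_𝕜 := by
      rw [hT, proj_apply_eq_self hx, inner_proj_left, proj_apply_eq_self hy]
    rw [hkey]
    calc ‖(⟪T x, y⟫_𝕜 : 𝕜)‖ ≤ ‖T x‖ * ‖y‖ := norm_inner_le_norm _ _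
      _ ≤ (‖T‖ * ‖x‖) * ‖y‖ :=
        mul_le_mul_of_nonneg_right (T.le_opNorm x) (norm_nonneg y)
      _ ≤ (‖T‖ * 1) * 1 := by
          apply mul_le_mul _ hy1 (norm_nonneg y)
          · exact mul_nonneg (norm_nonneg T) zero_le_one
          · exact mul_le_mul_of_nonneg_left hx1 (norm_nonneg T)
      _ = ‖T‖ := by ring
  · -- ‖T‖ ≤ sSup S
    apply T.opNorm_le_bound hsSup_nonneg
    intro u
    by_cases hTu : T u = 0
    · rw [hTu, norm_zero]
      exact mul_nonneg hsSup_nonneg (norm_nonneg u)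
    · have hu : u ≠ 0 := by
        rintro rfl; exact hTu (map_zero T)
    -- build witnesses
      have ha : (0:ℝ) < ‖u‖ := norm_pos_iff.mpr hu
      have hb : (0:ℝ) < ‖T u‖ := norm_pos_iff.mpr hTu
      set w : H := proj A u with hw
      set x : H := ((‖u‖ : 𝕜))⁻¹ • w with hx
      set y : H := ((‖T u‖ : 𝕜))⁻¹ • (T u) with hy
      have hxA : x ∈ A := A.smul_mem _ (proj_apply_mem A u)
      have hyB : y ∈ B := by
        have : T u ∈ B := by rw [hT]; exact proj_apply_mem B _
        exact B.smul_mem _ this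
      have hnormx : ‖x‖ ≤ 1 := by
        rw [hx, norm_smul, norm_inv, RCLike.norm_ofReal, abs_of_pos ha]
        rw [inv_mul_le_iff₀ ha, mul_one]
        exact norm_proj_apply_le A u
      have hnormy : ‖y‖ ≤ 1 := by
        rw [hy, norm_smul, norm_inv, RCLike.norm_ofReal, abs_of_pos hb]
        rw [inv_mul_le_iff₀ hb, mul_one]
      have hinner : ‖(⟪x, y⟫_𝕜 : 𝕜)‖ = ‖u‖⁻¹ * ‖T u‖ := by
        have hwT : ⟪w, T u⟫_𝕜 = ((‖T u‖ : ℝ) : 𝕜) ^ 2 := by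
          have := inner_proj_self_s9 (𝕜 := 𝕜) B w
          rw [hT]; exact this
        rw [hx, hy, inner_smul_left, inner_smul_right, hwT]
        simp only [norm_mul, RCLike.norm_conj, norm_inv, RCLike.norm_ofReal,
          norm_pow, abs_of_pos ha, abs_of_pos hb]
        field_simp
      have hmem : ‖u‖⁻¹ * ‖T u‖ ∈ S :=
        ⟨x, hxA, y, hyB, hnormx, hnormy, hinner.symm⟩
      have hle : ‖u‖⁻¹ * ‖T u‖ ≤ sSup S := le_csSup hbdd hmem
      calc ‖T u‖ = (‖u‖⁻¹ * ‖T u‖) * ‖u‖ := by field_simp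
        _ ≤ sSup S * ‖u‖ := mul_le_mul_of_nonneg_right hle (norm_nonneg u)
end

section
/- In a separable Hilbert space with orthonormal basis (u_n)_{n≥1}, define C₁ as the closed span of { u_{2n} + (1/n)u_{2n−1} : n ∈ ℕ } and C₂ as the closed span of { u_{2n} + (1/n)u_{2n+1} : n ∈ ℕ }. Then C₁ ∩ C₂ = {0}. -/
/-- With `(u_n)_{n≥1}` an orthonormal basis (here `u i` denotes `u_{i+1}`), the closed
spans `C₁` of `{u_{2n} + (1/n)u_{2n−1}}` and `C₂` of `{u_{2n} + (1/n)u_{2n+1}}`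
intersect trivially. -/
theorem closed_span_inter_eq_bot {𝕜 H : Type*} [RCLike 𝕜] [NormedAddCommGroup H]
    [InnerProductSpace 𝕜 H] [CompleteSpace H] (u : ℕ → H) (hu : Orthonormal 𝕜 u)
    (htotal : (Submodule.span 𝕜 (Set.range u)).topologicalClosure = ⊤) :
    (Submodule.span 𝕜
        (Set.range fun n : ℕ => u (2 * n + 1) + ((n : 𝕜) + 1)⁻¹ • u (2 * n))).topologicalClosure
      ⊓ (Submodule.span 𝕜
        (Set.range fun n : ℕ =>
          u (2 * n + 1) + ((n : 𝕜) + 1)⁻¹ • u (2 * n + 2))).topologicalClosure = ⊥ := by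
  have hui : ∀ i j, (inner 𝕜 (u i) (u j) : 𝕜) = if i = j then 1 else 0 :=
    orthonormal_iff_ite.mp hu
  have hconj : ∀ n : ℕ, (starRingEnd 𝕜) ((n : 𝕜) + 1) = (n : 𝕜) + 1 := by
    intro n; simp
  rw [Submodule.eq_bot_iff]
  intro x hx
  obtain ⟨hx1, hx2⟩ := Submodule.mem_inf.mp hx
  -- key: a vector orthogonal to all generators is orthogonal to x
  have key : ∀ (f : ℕ → H) (z : H), (∀ m, (inner 𝕜 z (f m) : 𝕜) = 0) →
      ∀ y ∈ (Submodule.span 𝕜 (Set.range f)).topologicalClosure, (inner 𝕜 z y : 𝕜) = 0 := by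
    intro f z hz y hy
    have h1 : (Submodule.span 𝕜 (Set.range f)).topologicalClosure ≤
        LinearMap.ker (innerSL 𝕜 z : H →ₗ[𝕜] 𝕜) := by
      apply Submodule.topologicalClosure_minimal
      · rw [Submodule.span_le]
        rintro _ ⟨m, rfl⟩
        simpa using hz m
      · exact ContinuousLinearMap.isClosed_ker (innerSL 𝕜 z)
    simpa using h1 hy
  have hne : ∀ n : ℕ, ((n : 𝕜) + 1) ≠ 0 := by
    intro n
    have := Nat.cast_add_one_ne_zero (R := 𝕜) n
    simpa using this
  -- coefficient at u 0 vanishes (from C₂)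
  have h0 : (inner 𝕜 (u 0) x : 𝕜) = 0 := by
    refine key _ (u 0) ?_ x hx2
    intro m
    simp [inner_add_right, inner_smul_right, hui]
  -- from C₁: odd coefficient determined by even one
  have hA : ∀ n : ℕ, (inner 𝕜 (u (2 * n + 1)) x : 𝕜) = ((n : 𝕜) + 1) * inner 𝕜 (u (2 * n)) x := by
    intro n
    have hz : ∀ m, (inner 𝕜 (u (2 * n + 1) - ((n : 𝕜) + 1) • u (2 * n))
        (u (2 * m + 1) + ((m : 𝕜) + 1)⁻¹ • u (2 * m)) : 𝕜) = 0 := by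
      intro m
      rcases eq_or_ne n m with rfl | hnm
      · simp [inner_sub_left, inner_add_right, inner_smul_right, inner_smul_left, hui,
          hconj, hne n, hu.1]
        rw [show (-1 + -(n : 𝕜)) = -((n : 𝕜) + 1) by ring, mul_neg,
          inv_mul_cancel₀ (hne n)]
        ring
      · have h1 : 2 * n + 1 ≠ 2 * m + 1 := by omega
        have h2 : 2 * n + 1 ≠ 2 * m := by omega
        have h3 : 2 * n ≠ 2 * m + 1 := by omega
        have h4 : 2 * n ≠ 2 * m := by omega
        simp [inner_sub_left, inner_add_right, inner_smul_right, inner_smul_left, hui,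
          h1, h2, h3, h4]
    have := key _ _ hz x hx1
    rw [inner_sub_left, inner_smul_left, hconj, sub_eq_zero] at this
    linear_combination this
  -- from C₂: next even coefficient determined by odd one
  have hB : ∀ n : ℕ, (inner 𝕜 (u (2 * n + 2)) x : 𝕜)
      = ((n : 𝕜) + 1)⁻¹ * inner 𝕜 (u (2 * n + 1)) x := by
    intro n
    have hz : ∀ m, (inner 𝕜 (u (2 * n + 2) - ((n : 𝕜) + 1)⁻¹ • u (2 * n + 1))
        (u (2 * m + 1) + ((m : 𝕜) + 1)⁻¹ • u (2 * m + 2)) : 𝕜) = 0 := by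
      intro m
      rcases eq_or_ne n m with rfl | hnm
      · simp [inner_sub_left, inner_add_right, inner_smul_right, inner_smul_left, hui,
          hconj, hne n, hu.1]
      · have h1 : 2 * n + 2 ≠ 2 * m + 1 := by omega
        have h2 : 2 * n + 2 ≠ 2 * m + 2 := by omega
        have h3 : 2 * n + 1 ≠ 2 * m + 1 := by omega
        have h4 : 2 * n + 1 ≠ 2 * m + 2 := by omega
        simp [inner_sub_left, inner_add_right, inner_smul_right, inner_smul_left, hui,
          h1, h2, h3, h4, hnm, show 2 * n ≠ 2 * m + 1 by omega]
    have := key _ _ hz x hx2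
    rw [inner_sub_left, inner_smul_left, sub_eq_zero] at this
    rw [this]
    simp [map_inv₀, hconj]
  -- all even coefficients vanish by induction, then odd ones
  have heven : ∀ n : ℕ, (inner 𝕜 (u (2 * n)) x : 𝕜) = 0 := by
    intro n
    induction n with
    | zero => simpa using h0
    | succ k ih =>
      have h2 : (2 : ℕ) * (k + 1) = 2 * k + 2 := by ring
      rw [h2, hB k, hA k, ih]
      ring
  have hall : ∀ k : ℕ, (inner 𝕜 (u k) x : 𝕜) = 0 := by
    intro k
    obtain ⟨m, rfl | rfl⟩ : ∃ m, k = 2 * m ∨ k = 2 * m + 1 := ⟨k / 2, by omega⟩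
    · exact heven m
    · rw [hA m, heven m]; ring
  -- conclude x = 0 by totality
  have hx_orth : x ∈ (Submodule.span 𝕜 (Set.range u))ᗮ := by
    rw [Submodule.mem_orthogonal]
    intro s hs
    induction hs using Submodule.span_induction with
    | mem v hv => obtain ⟨k, rfl⟩ := hv; exact hall k
    | zero => simp
    | add a b _ _ ha hb => rw [inner_add_left, ha, hb, add_zero]
    | smul c a _ ha => rw [inner_smul_left, ha, mul_zero]
  rw [Submodule.topologicalClosure_eq_top_iff] at htotal
  rw [htotal] at hx_orth
  simpa using hx_orth
end
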